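/- Let G be a hypergroupoid. Then the power set P(G) of the set of all arrows of G, with product U·V = {t | ∃u ∈ U, v ∈ V composable with t ∈ u∘v}, involution U* = {x* | x ∈ U}, and the set of identities as unit, satisfies the modularity law: U ∩ (V·W) ⊆ ((U·W*) ∩ V)·W. -/
import Mathlib


/-- A hypergroupoid: objects `O`, arrows `G`, source/target maps, involution `inv`,
multivalued composition `comp x y` (empty for non-composable pairs), identities `one e`,
with axioms (HG1), (HG2), (HG3). -/
structure Hypergroupoid (O : Type*) (G : Type*) where
  src : G → O
  tgt : G → O
  inv : G → G
  comp : G → G → Set G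
  one : O → G
  one_src : ∀ e, src (one e) = e
  one_tgt : ∀ e, tgt (one e) = e
  one_comp : ∀ x, comp (one (tgt x)) x = {x}
  comp_one : ∀ x, comp x (one (src x)) = {x}
  comp_empty : ∀ x y, src x ≠ tgt y → comp x y = ∅
  mem_comp_src : ∀ {x y z}, z ∈ comp x y → src z = src y
  mem_comp_tgt : ∀ {x y z}, z ∈ comp x y → tgt z = tgt x
  inv_src : ∀ x, src (inv x) = tgt x
  inv_tgt : ∀ x, tgt (inv x) = src x
  inv_inv : ∀ x, inv (inv x) = x
  assoc : ∀ x y z, (⋃ w ∈ comp x y, comp w z) = ⋃ w ∈ comp y z, comp x w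
  hg3_left : ∀ {x y z}, x ∈ comp y z → z ∈ comp (inv y) x
  hg3_right : ∀ {x y z}, x ∈ comp y z → y ∈ comp x (inv z)

namespace Hypergroupoid

variable {O G : Type*}

/-- Product of two sets of arrows: `U·V = ⋃_{u∈U, v∈V} u∘v`. -/
def setMul (H : Hypergroupoid O G) (U V : Set G) : Set G :=
  {t | ∃ u ∈ U, ∃ v ∈ V, t ∈ H.comp u v}

/-- Involution of a set of arrows: `U* = {x* | x ∈ U}`. -/
def setInv (H : Hypergroupoid O G) (U : Set G) : Set G :=
  H.inv '' U

end Hypergroupoid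

/-- In the power set quantale of a hypergroupoid, the modularity law holds:
`U ∩ (V·W) ⊆ ((U·W*) ∩ V)·W`. -/
theorem stmt7 {O G : Type*} (H : Hypergroupoid O G) (U V W : Set G) :
    U ∩ H.setMul V W ⊆ H.setMul (H.setMul U (H.setInv W) ∩ V) W := by
  rintro t ⟨htU, v, hv, w, hw, ht⟩
  exact ⟨v, ⟨⟨t, htU, H.inv w, ⟨w, hw, rfl⟩, H.hg3_right ht⟩, hv⟩, w, hw, ht⟩
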